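/- Suppose a unipotent u (identified with a matrix L) satisfies: there exist infinitely many pairs ((p̄,q̄), t) with (p̄,q̄) ∈ ℤ^ℓ × ℤ^m primitive and t > 0 such that e^{λt}‖p̄ + Lq̄‖_e² + e^{−μt}‖q̄‖_e² ≤ e^{(φ(t) − ημ t)/η}, where φ is strictly increasing and η(λ+μ)·id − φ is strictly increasing. Then for each such pair, ‖q̄‖_e² ≤ e^{φ(t)/η}, hence t ≥ φ^{−1}(2η ln‖q̄‖_e), and consequently ‖p̄ + Lq̄‖_{max} ≤ √s · ‖q̄‖_{max} · e^{−((λ+μ)/2)·φ^{−1}(2η ln ‖q̄‖_{max})}. -/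

import Mathlib

open Finset

/-- If the unipotent corresponding to `L` satisfies
`e^{λt}‖p̄ + Lq̄‖_e² + e^{-μt}‖q̄‖_e² ≤ e^{(φ(t) - ημt)/η}` at some time `t > 0`, where
`φ` and `η(λ+μ)·id - φ` are strictly increasing, then `‖q̄‖_e² ≤ e^{φ(t)/η}`, hence
`t ≥ φ⁻¹(2η ln ‖q̄‖_e)`, and
`‖p̄ + Lq̄‖_max ≤ √s · ‖q̄‖_max · e^{-((λ+μ)/2)·φ⁻¹(2η ln ‖q̄‖_max)}`. -/
theorem stmt17 (ℓ m : ℕ) (hl : 1 ≤ ℓ) (hm : 1 ≤ m)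
    (η lam mu : ℝ)
    (hη : η = Real.sqrt ((ℓ + m : ℝ) / ((ℓ + m : ℝ) - 1)))
    (hlam : lam = Real.sqrt (m / ((ℓ + m : ℝ) * ℓ)))
    (hmu : mu = Real.sqrt (ℓ / ((ℓ + m : ℝ) * m)))
    (L : Matrix (Fin ℓ) (Fin m) ℝ) (φ : ℝ → ℝ)
    (hφ : StrictMono φ)
    (hφ2 : StrictMono (fun t : ℝ => η * (lam + mu) * t - φ t))
    (p : Fin ℓ → ℤ) (q : Fin m → ℤ) (hq : q ≠ 0) (t : ℝ) (ht : 0 < t)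
    (hineq : Real.exp (lam * t) *
          (∑ i, ((p i : ℝ) + L.mulVec (fun j => (q j : ℝ)) i) ^ 2)
        + Real.exp (-mu * t) * (∑ j, ((q j : ℝ)) ^ 2)
        ≤ Real.exp ((φ t - η * mu * t) / η)) :
    (∑ j, ((q j : ℝ)) ^ 2 ≤ Real.exp (φ t / η)) ∧
    (∀ u : ℝ, φ u = 2 * η * Real.log (Real.sqrt (∑ j, ((q j : ℝ)) ^ 2)) → u ≤ t) ∧
    (∀ u : ℝ, φ u = 2 * η * Real.log (⨆ j, |(q j : ℝ)|) →
      (⨆ i, |(p i : ℝ) + L.mulVec (fun j => (q j : ℝ)) i|)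
        ≤ Real.sqrt (ℓ + m) * (⨆ j, |(q j : ℝ)|) *
            Real.exp (-((lam + mu) / 2) * u)) := by

  have hinstm : Nonempty (Fin m) := ⟨⟨0, hm⟩⟩
  have hinstl : Nonempty (Fin ℓ) := ⟨⟨0, hl⟩⟩
  set P := ∑ i, ((p i : ℝ) + L.mulVec (fun j => (q j : ℝ)) i) ^ 2 with hPdef
  set Q := ∑ j, ((q j : ℝ)) ^ 2 with hQdef
  have hPnn : 0 ≤ P := Finset.sum_nonneg fun i _ => sq_nonneg _
  have hQnn : 0 ≤ Q := Finset.sum_nonneg fun j _ => sq_nonneg _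
  have hl1 : (1:ℝ) ≤ (ℓ:ℝ) := by exact_mod_cast hl
  have hm1 : (1:ℝ) ≤ (m:ℝ) := by exact_mod_cast hm
  have hηpos : 0 < η := by
    rw [hη]; apply Real.sqrt_pos.2; apply div_pos <;> linarith
  obtain ⟨j0, hj0⟩ : ∃ j, q j ≠ 0 := by
    by_contra h; push_neg at h; exact hq (funext h)
  have habsj0 : (1:ℝ) ≤ |(q j0 : ℝ)| := by
    have := Int.one_le_abs hj0
    calc (1:ℝ) ≤ ((|q j0| : ℤ) : ℝ) := by exact_mod_cast this
    _ = |(q j0 : ℝ)| := by push_cast; ring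
  have hQ1 : (1:ℝ) ≤ Q := by
    have h1 : (1:ℝ) ≤ ((q j0 : ℝ))^2 := by nlinarith [sq_abs ((q j0 : ℝ))]
    have h2 : ((q j0 : ℝ))^2 ≤ Q :=
      Finset.single_le_sum (fun j _ => sq_nonneg ((q j : ℝ))) (Finset.mem_univ j0)
    linarith
  -- Part 1
  have key1 : Q ≤ Real.exp (φ t / η) := by
    have h1 : Q * Real.exp (-mu * t) ≤ Real.exp (φ t / η) * Real.exp (-mu * t) := by
      rw [← Real.exp_add]
      have he : φ t / η + (-mu * t) = (φ t - η * mu * t) / η := by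
        field_simp; ring
      rw [he]
      have h0 : 0 ≤ Real.exp (lam * t) * P := mul_nonneg (Real.exp_pos _).le hPnn
      nlinarith [hineq]
    exact le_of_mul_le_mul_right h1 (Real.exp_pos _)
  refine ⟨key1, ?_, ?_⟩
  · -- Part 2
    intro u hu
    have hφu : φ u = η * Real.log Q := by
      rw [hu, Real.log_sqrt hQnn]; ring
    have hlogQ : Real.log Q ≤ φ t / η := by
      have h := Real.log_le_log (by linarith : (0:ℝ) < Q) key1
      rwa [Real.log_exp] at h
    have hφut : φ u ≤ φ t := by
      rw [hφu]
      calc η * Real.log Q ≤ η * (φ t / η) :=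
        mul_le_mul_of_nonneg_left hlogQ hηpos.le
      _ = φ t := by field_simp
    exact hφ.le_iff_le.mp hφut
  · -- Part 3
    intro u hu
    set M := ⨆ j, |(q j : ℝ)| with hMdef
    set N := ⨆ i, |(p i : ℝ) + L.mulVec (fun j => (q j : ℝ)) i| with hNdef
    have hbddq : BddAbove (Set.range fun j => |(q j : ℝ)|) :=
      Set.Finite.bddAbove (Set.finite_range _)
    have hbddp : BddAbove (Set.range fun i =>
        |(p i : ℝ) + L.mulVec (fun j => (q j : ℝ)) i|) :=
      Set.Finite.bddAbove (Set.finite_range _)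
    obtain ⟨j1, hj1⟩ := Finite.exists_max fun j => |(q j : ℝ)|
    have hMeq : M = |(q j1 : ℝ)| :=
      le_antisymm (ciSup_le hj1) (le_ciSup hbddq j1)
    obtain ⟨i1, hi1⟩ := Finite.exists_max fun i =>
      |(p i : ℝ) + L.mulVec (fun j => (q j : ℝ)) i|
    have hNeq : N = |(p i1 : ℝ) + L.mulVec (fun j => (q j : ℝ)) i1| :=
      le_antisymm (ciSup_le hi1) (le_ciSup hbddp i1)
    have hM1 : (1:ℝ) ≤ M := le_trans habsj0 (le_ciSup hbddq j0)
    have hNnn : 0 ≤ N := hNeq ▸ abs_nonneg _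
    have hM2Q : M ^ 2 ≤ Q := by
      rw [hMeq, sq_abs]
      exact Finset.single_le_sum (fun j _ => sq_nonneg ((q j : ℝ))) (Finset.mem_univ j1)
    have hN2P : N ^ 2 ≤ P := by
      rw [hNeq, sq_abs]
      exact Finset.single_le_sum
        (fun i _ => sq_nonneg (((p i : ℝ) + L.mulVec (fun j => (q j : ℝ)) i)))
        (Finset.mem_univ i1)
    -- φ u ≤ φ t hence u ≤ t
    have hφu : φ u = η * (2 * Real.log M) := by rw [hu]; ring
    have hlogM2 : 2 * Real.log M ≤ Real.log Q := by
      have h := Real.log_le_log (by positivity : (0:ℝ) < M ^ 2)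
        (le_trans hM2Q (le_refl Q))
      rwa [Real.log_pow, Nat.cast_ofNat] at h
    have hlogQ : Real.log Q ≤ φ t / η := by
      have h := Real.log_le_log (by linarith : (0:ℝ) < Q) key1
      rwa [Real.log_exp] at h
    have hφut : φ u ≤ φ t := by
      rw [hφu]
      calc η * (2 * Real.log M) ≤ η * (φ t / η) :=
        mul_le_mul_of_nonneg_left (le_trans hlogM2 hlogQ) hηpos.le
      _ = φ t := by field_simp
    have hut : u ≤ t := hφ.le_iff_le.mp hφut
    have hmono := hφ2.monotone hut
    -- P ≤ exp(φ t/η - (lam+mu) t)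
    have hPle : P ≤ Real.exp (φ t / η - (lam + mu) * t) := by
      have h1 : Real.exp (lam * t) * P ≤ Real.exp (φ t / η - mu * t) := by
        have he : (φ t - η * mu * t) / η = φ t / η - mu * t := by
          field_simp
        have h0 : 0 ≤ Real.exp (-mu * t) * Q := mul_nonneg (Real.exp_pos _).le hQnn
        rw [← he]; linarith [hineq]
      have h2 : P = Real.exp (lam * t) * P * Real.exp (-(lam * t)) := by
        rw [mul_comm (Real.exp (lam * t)) P, mul_assoc, ← Real.exp_add]
        simp
      rw [h2]
      calc Real.exp (lam * t) * P * Real.exp (-(lam * t))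
          ≤ Real.exp (φ t / η - mu * t) * Real.exp (-(lam * t)) :=
            mul_le_mul_of_nonneg_right h1 (Real.exp_pos _).le
      _ = Real.exp (φ t / η - (lam + mu) * t) := by rw [← Real.exp_add]; ring_nf
    have hexp_le : Real.exp (φ t / η - (lam + mu) * t)
        ≤ Real.exp (φ u / η - (lam + mu) * u) := by
      apply Real.exp_le_exp.2
      have : η * (lam + mu) * u - φ u ≤ η * (lam + mu) * t - φ t := hmono
      have h3 : φ t - η * (lam + mu) * t ≤ φ u - η * (lam + mu) * u := by linarith
      calc φ t / η - (lam + mu) * t = (φ t - η * (lam + mu) * t) / η := by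
            field_simp
      _ ≤ (φ u - η * (lam + mu) * u) / η := (div_le_div_iff_of_pos_right hηpos).2 h3
      _ = φ u / η - (lam + mu) * u := by field_simp
    have hMpos : (0:ℝ) < M := by linarith
    have hexp_eq : Real.exp (φ u / η - (lam + mu) * u)
        = M ^ 2 * Real.exp (-(lam + mu) * u) := by
      have h4 : φ u / η = 2 * Real.log M := by
        rw [hφu]; field_simp
      rw [Real.exp_sub, h4]
      rw [show (2 : ℝ) * Real.log M = Real.log (M ^ 2) by
        rw [Real.log_pow]; push_cast; ring]
      rw [Real.exp_log (by positivity)]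
      rw [neg_mul, Real.exp_neg, div_eq_mul_inv]
    have hs1 : (1:ℝ) ≤ (ℓ + m : ℝ) := by linarith
    have hN2 : N ^ 2 ≤ (Real.sqrt (ℓ + m) * M * Real.exp (-((lam + mu) / 2) * u)) ^ 2 := by
      have hsq : (Real.sqrt (ℓ + m)) ^ 2 = (ℓ + m : ℝ) :=
        Real.sq_sqrt (by linarith)
      have hex : (Real.exp (-((lam + mu) / 2) * u)) ^ 2 = Real.exp (-(lam + mu) * u) := by
        rw [sq, ← Real.exp_add]; congr 1; ring
      calc N ^ 2 ≤ P := hN2P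
      _ ≤ Real.exp (φ t / η - (lam + mu) * t) := hPle
      _ ≤ Real.exp (φ u / η - (lam + mu) * u) := hexp_le
      _ = M ^ 2 * Real.exp (-(lam + mu) * u) := hexp_eq
      _ ≤ (ℓ + m : ℝ) * M ^ 2 * Real.exp (-(lam + mu) * u) := by
            rw [mul_assoc]
            exact le_mul_of_one_le_left (by positivity) hs1
      _ = (Real.sqrt (ℓ + m) * M * Real.exp (-((lam + mu) / 2) * u)) ^ 2 := by
            rw [mul_pow, mul_pow, hsq, hex]
    have hRnn : 0 ≤ Real.sqrt (ℓ + m) * M * Real.exp (-((lam + mu) / 2) * u) := by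
      positivity
    exact (pow_le_pow_iff_left₀ hNnn hRnn two_ne_zero).mp hN2
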